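/- The image of α is given by range(α) = span_{ℤ/dℤ}{ f_1, …, f_{n−1} } + (ℤ/dℤ)·(N_1⋯N_n − 1) f_n, where f_i = e_i − N_i e_{i+1} for 1 ≤ i ≤ n−1 and f_n = e_n. -/

import Mathlib

set_option maxHeartbeats 1600000 in
/-- Let `M = (ℤ/dℤ)^n` (with `n ≥ 1`) and let `α : M → M` be the `ℤ/dℤ`-linear map
determined on the standard basis by `α(e i) = e i - N i • e (i+1)` (indices mod `n`,
so that `α(e_n) = e_n - N_n e_1`).  Then the image of `α` is
`span{f_1, …, f_{n-1}} + (ℤ/dℤ)·(N_1 ⋯ N_n - 1) f_n`, where `f_i = e_i - N_i e_{i+1}`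
for `1 ≤ i ≤ n-1` and `f_n = e_n`. -/
theorem range_eq_span_f
    (n d : ℕ) [NeZero n] (N : Fin n → ℤ)
    (α : (Fin n → ZMod d) →ₗ[ZMod d] (Fin n → ZMod d))
    (hα : ∀ i : Fin n,
      α (Pi.single i 1) =
        (Pi.single i 1 : Fin n → ZMod d) -
          (N i : ZMod d) • (Pi.single (i + 1) 1 : Fin n → ZMod d)) :
    LinearMap.range α =
      Submodule.span (ZMod d)
        {x : Fin n → ZMod d | ∃ i : Fin n, (i : ℕ) < n - 1 ∧
          x = (Pi.single i 1 : Fin n → ZMod d) -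
            (N i : ZMod d) • (Pi.single (i + 1) 1 : Fin n → ZMod d)}
      ⊔ Submodule.span (ZMod d)
        {((((∏ i, N i) - 1 : ℤ) : ZMod d) •
          (Pi.single (⟨n - 1, by have := NeZero.pos n; omega⟩ : Fin n) 1 :
            Fin n → ZMod d))} := by
  obtain ⟨m, rfl⟩ : ∃ m, n = m + 1 := ⟨n - 1, (Nat.succ_pred_eq_of_pos (NeZero.pos n)).symm⟩
  set F : Set (Fin (m+1) → ZMod d) :=
    {x : Fin (m+1) → ZMod d | ∃ i : Fin (m+1), (i : ℕ) < m + 1 - 1 ∧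
      x = (Pi.single i 1 : Fin (m+1) → ZMod d) -
        (N i : ZMod d) • (Pi.single (i+1) 1 : Fin (m+1) → ZMod d)} with hF
  set P := Submodule.span (ZMod d) F with hP
  set c : ZMod d := (((∏ i, N i) - 1 : ℤ) : ZMod d) with hc
  set Q := Submodule.span (ZMod d)
      {(c • (Pi.single (Fin.last m) 1 : Fin (m+1) → ZMod d))} with hQ
  show LinearMap.range α = P ⊔ Q
  set Np : ℕ → ℤ := fun j => if h : j < m + 1 then N ⟨j, h⟩ else 1 with hNp
  -- key telescoping lemma
  have keyA : ∀ r k (hk : k + r = m),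
      (Pi.single (⟨k, by omega⟩ : Fin (m+1)) 1 : Fin (m+1) → ZMod d) -
        ((∏ j ∈ Finset.Ico k m, Np j : ℤ) : ZMod d) •
          (Pi.single (Fin.last m) 1 : Fin (m+1) → ZMod d) ∈ P := by
    intro r
    induction r with
    | zero =>
      intro k hk
      have hkm : k = m := by omega
      subst hkm
      have : (⟨k, by omega⟩ : Fin (k+1)) = Fin.last k := rfl
      simp [this, Finset.Ico_self]
    | succ r ih =>
      intro k hk
      have hk1 : (k + 1) + r = m := by omega
      have hadd : (⟨k, by omega⟩ : Fin (m+1)) + 1 = ⟨k+1, by omega⟩ := by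
        apply Fin.ext
        rw [Fin.val_add_one_of_lt (by simp [Fin.lt_def]; omega)]
      have hmem : (Pi.single (⟨k, by omega⟩ : Fin (m+1)) 1 : Fin (m+1) → ZMod d) -
          (N ⟨k, by omega⟩ : ZMod d) •
            (Pi.single (⟨k+1, by omega⟩ : Fin (m+1)) 1 : Fin (m+1) → ZMod d) ∈ P := by
        apply Submodule.subset_span
        exact ⟨⟨k, by omega⟩, by simpa using by omega, by rw [hadd]⟩
      have hprod : ((∏ j ∈ Finset.Ico k m, Np j : ℤ) : ZMod d)
          = (N ⟨k, by omega⟩ : ZMod d) *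
            ((∏ j ∈ Finset.Ico (k+1) m, Np j : ℤ) : ZMod d) := by
        rw [Finset.prod_eq_prod_Ico_succ_bot (by omega)]
        push_cast
        rw [show Np k = N ⟨k, by omega⟩ from dif_pos (by omega)]
      have hmem2 := Submodule.add_mem P hmem
        (Submodule.smul_mem P (N ⟨k, by omega⟩ : ZMod d) (ih (k+1) hk1))
      convert hmem2 using 1
      rw [hprod]
      module
  have hw : (Pi.single (⟨0, by omega⟩ : Fin (m+1)) 1 : Fin (m+1) → ZMod d) -
      ((∏ j ∈ Finset.Ico 0 m, Np j : ℤ) : ZMod d) •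
        (Pi.single (Fin.last m) 1 : Fin (m+1) → ZMod d) ∈ P := keyA m 0 (by omega)
  -- product identity
  have hNpv : ∀ i : Fin (m+1), Np (i : ℕ) = N i := by
    intro i
    simp [hNp, i.isLt]
    intro h; have := i.isLt; omega
  have hprodAll : ((∏ i, N i : ℤ) : ZMod d)
      = ((∏ j ∈ Finset.Ico 0 m, Np j : ℤ) : ZMod d) * (N (Fin.last m) : ZMod d) := by
    have h1 : (∏ i, N i) = ∏ j ∈ Finset.range (m+1), Np j := by
      rw [← Fin.prod_univ_eq_prod_range]
      exact Finset.prod_congr rfl fun i _ => (hNpv i).symm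
    rw [h1, Finset.range_eq_Ico, Finset.prod_Ico_succ_top (by omega)]
    push_cast
    rw [show Np m = N (Fin.last m) from hNpv (Fin.last m)]
  have hc' : c = ((∏ j ∈ Finset.Ico 0 m, Np j : ℤ) : ZMod d) * (N (Fin.last m) : ZMod d) - 1 := by
    rw [hc, Int.cast_sub, Int.cast_one, hprodAll]
  -- range α = span of images of basis
  have htop : Submodule.span (ZMod d)
      (Set.range fun i : Fin (m+1) => (Pi.single i 1 : Fin (m+1) → ZMod d)) = ⊤ := by
    have := (Pi.basisFun (ZMod d) (Fin (m+1))).span_eq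
    rw [show Set.range (Pi.basisFun (ZMod d) (Fin (m+1)))
        = Set.range fun i : Fin (m+1) => (Pi.single i 1 : Fin (m+1) → ZMod d) from ?_] at this
    · exact this
    · ext i
      simp [Pi.basisFun_apply]
  have hrange : LinearMap.range α = Submodule.span (ZMod d)
      (Set.range fun i : Fin (m+1) => α (Pi.single i 1)) := by
    conv_lhs => rw [LinearMap.range_eq_map, ← htop, Submodule.map_span]
    congr 1
    rw [← Set.range_comp]
    rfl
  have hform : α (Pi.single (Fin.last m) 1) =
      (Pi.single (Fin.last m) 1 : Fin (m+1) → ZMod d) -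
        (N (Fin.last m) : ZMod d) • (Pi.single (0 : Fin (m+1)) 1 : Fin (m+1) → ZMod d) := by
    rw [hα (Fin.last m), Fin.last_add_one]
  have hset : (Set.range fun i : Fin (m+1) => α (Pi.single i 1))
      = F ∪ {α (Pi.single (Fin.last m) 1)} := by
    ext x
    constructor
    · rintro ⟨i, rfl⟩
      by_cases hi : (i : ℕ) < m
      · exact Or.inl ⟨i, by omega, hα i⟩
      · have : i = Fin.last m := by
          apply Fin.ext
          have := i.isLt
          simp only [Fin.val_last]
          omega
        exact Or.inr (by rw [this]; rfl)
    · rintro (⟨i, hi, rfl⟩ | h)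
      · exact ⟨i, hα i⟩
      · exact ⟨Fin.last m, h.symm ▸ rfl⟩
  have h0 : (⟨0, by omega⟩ : Fin (m+1)) = 0 := rfl
  rw [hrange, hset, Submodule.span_union, ← hP]
  -- now show P ⊔ span {h} = P ⊔ Q
  apply le_antisymm
  · apply sup_le le_sup_left
    rw [Submodule.span_le, Set.singleton_subset_iff]
    have h1 : c • (Pi.single (Fin.last m) 1 : Fin (m+1) → ZMod d) ∈ P ⊔ Q :=
      Submodule.mem_sup_right (Submodule.subset_span rfl)
    have h2 := Submodule.mem_sup_left (T := Q) hw
    have h3 := Submodule.add_mem _ (Submodule.neg_mem _ h1)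
      (Submodule.smul_mem _ (-(N (Fin.last m) : ZMod d)) h2)
    show α (Pi.single (Fin.last m) 1) ∈ P ⊔ Q
    rw [hform]
    convert h3 using 1
    rw [hc', h0]
    module
  · apply sup_le le_sup_left
    rw [Submodule.span_le, Set.singleton_subset_iff]
    have h1 : α (Pi.single (Fin.last m) 1) ∈
        P ⊔ Submodule.span (ZMod d) {α (Pi.single (Fin.last m) 1)} :=
      Submodule.mem_sup_right (Submodule.subset_span rfl)
    have h2 := Submodule.mem_sup_left
      (T := Submodule.span (ZMod d) {α (Pi.single (Fin.last m) 1)}) hw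
    have h3 := Submodule.add_mem _ (Submodule.neg_mem _ h1)
      (Submodule.smul_mem _ (-(N (Fin.last m) : ZMod d)) h2)
    show c • (Pi.single (Fin.last m) 1 : Fin (m+1) → ZMod d) ∈ _
    rw [SetLike.mem_coe]
    convert h3 using 1
    rw [hform, hc', h0]
    module
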